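/- For every s ∈ ℂ, the series u(y) = Σ_{j=0}^∞ e^{−(s+j)y}/(j!·Γ(2s+j+1)) converges absolutely for every y ∈ ℝ, and u is twice differentiable on ℝ and satisfies the Yukawa Schrödinger equation −u''(y) + e^{−y}·u(y) + s²·u(y) = 0 for all y ∈ ℝ. (Here 1/Γ denotes the entire reciprocal Gamma function, vanishing at non-positive integer arguments of Γ; replacing s by −s gives a second solution.) -/

import Mathlib

open Complex

private lemma gammaInvBound (s : ℂ) :
    ∃ C : ℝ, 0 ≤ C ∧ ∀ j : ℕ, ‖(Complex.Gamma (2*s + (j:ℂ) + 1))⁻¹‖ ≤ C := by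
  obtain ⟨N, hN⟩ := exists_nat_ge (2 * ‖s‖)
  have hstep : ∀ j : ℕ, N ≤ j →
      ‖(Complex.Gamma (2*s + (j:ℂ) + 1 + 1))⁻¹‖ ≤ ‖(Complex.Gamma (2*s + (j:ℂ) + 1))⁻¹‖ := by
    intro j hj
    have hz : (1:ℝ) ≤ ‖2*s + (j:ℂ) + 1‖ := by
      have h1 : ‖((j:ℂ)+1)‖ - ‖-(2*s)‖ ≤ ‖((j:ℂ)+1) - (-(2*s))‖ := norm_sub_norm_le _ _
      have h2 : ((j:ℂ)+1) - (-(2*s)) = 2*s + (j:ℂ) + 1 := by ring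
      have h3 : ‖((j:ℂ)+1)‖ = (j:ℝ)+1 := by
        rw [show ((j:ℂ)+1) = ((j+1:ℕ):ℂ) by push_cast; ring, Complex.norm_natCast]
        push_cast; ring
      have h4 : ‖-(2*s)‖ = 2*‖s‖ := by
        rw [norm_neg, norm_mul]; norm_num
      rw [h2, h3, h4] at h1
      have hjN : (N:ℝ) ≤ j := by exact_mod_cast hj
      linarith
    have hz0 : 2*s + (j:ℂ) + 1 ≠ 0 := by
      intro h; rw [h, norm_zero] at hz; linarith
    rw [Complex.Gamma_add_one _ hz0, mul_inv, norm_mul]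
    have : ‖(2*s + (j:ℂ) + 1)⁻¹‖ ≤ 1 := by
      rw [norm_inv]
      exact inv_le_one_of_one_le₀ hz
    calc ‖(2*s + (j:ℂ) + 1)⁻¹‖ * ‖(Complex.Gamma (2*s + (j:ℂ) + 1))⁻¹‖
        ≤ 1 * ‖(Complex.Gamma (2*s + (j:ℂ) + 1))⁻¹‖ := by
          exact mul_le_mul_of_nonneg_right this (norm_nonneg _)
      _ = ‖(Complex.Gamma (2*s + (j:ℂ) + 1))⁻¹‖ := one_mul _
  have hdec : ∀ k : ℕ,
      ‖(Complex.Gamma (2*s + ((N+k:ℕ):ℂ) + 1))⁻¹‖ ≤ ‖(Complex.Gamma (2*s + (N:ℂ) + 1))⁻¹‖ := by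
    intro k
    induction k with
    | zero => simp
    | succ k ih =>
      have e : (2*s + ((N+(k+1):ℕ):ℂ) + 1) = 2*s + ((N+k:ℕ):ℂ) + 1 + 1 := by
        push_cast; ring
      rw [e]
      exact (hstep (N+k) (Nat.le_add_right _ _)).trans ih
  refine ⟨(Finset.range (N+1)).sup' ⟨0, by simp⟩
      (fun j => ‖(Complex.Gamma (2*s + (j:ℂ) + 1))⁻¹‖), ?_, ?_⟩
  · exact (norm_nonneg _).trans
      (Finset.le_sup' (f := fun j : ℕ => ‖(Complex.Gamma (2*s + (j:ℂ) + 1))⁻¹‖)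
        (by simp : 0 ∈ Finset.range (N+1)))
  · intro j
    rcases le_or_gt j N with h | h
    · exact Finset.le_sup' (f := fun j : ℕ => ‖(Complex.Gamma (2*s + (j:ℂ) + 1))⁻¹‖)
        (Finset.mem_range.mpr (Nat.lt_succ_of_le h))
    · obtain ⟨k, rfl⟩ : ∃ k, j = N + k := ⟨j - N, (Nat.add_sub_cancel' h.le).symm⟩
      exact (hdec k).trans
        (Finset.le_sup' (f := fun j : ℕ => ‖(Complex.Gamma (2*s + (j:ℂ) + 1))⁻¹‖)
          (Finset.mem_range.mpr (Nat.lt_succ_of_le le_rfl)))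

private lemma summableMaster (B R : ℝ) (hB : 0 ≤ B) :
    Summable (fun j : ℕ => (B + j)^2 * Real.exp (j*R) / j.factorial) := by
  have h := (Real.summable_pow_div_factorial (4 * Real.exp R)).mul_left (2*B^2 + 2)
  refine h.of_nonneg_of_le (fun j => by positivity) (fun j => ?_)
  have h2j : (j:ℝ) ≤ 2^j := by exact_mod_cast (Nat.lt_two_pow_self (n := j)).le
  have h4 : ((j:ℝ))^2 ≤ 4^j := by
    calc ((j:ℝ))^2 ≤ ((2:ℝ)^j)^2 := by
          exact pow_le_pow_left₀ (Nat.cast_nonneg j) h2j 2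
      _ = 4^j := by
          rw [show (4:ℝ) = 2^2 by norm_num, ← pow_mul, ← pow_mul, Nat.mul_comm]
  have h1 : (1:ℝ) ≤ 4^j := one_le_pow₀ (by norm_num)
  have hexp : Real.exp ((j:ℝ)*R) = (Real.exp R)^j := by
    rw [← Real.exp_nat_mul]
  have key : (B+j)^2 ≤ (2*B^2+2) * 4^j := by nlinarith [sq_nonneg (B - j)]
  calc (B + j)^2 * Real.exp (j*R) / j.factorial
      ≤ ((2*B^2+2) * 4^j) * (Real.exp R)^j / j.factorial := by
        rw [hexp]; gcongr
    _ = (2*B^2 + 2) * ((4 * Real.exp R)^j / j.factorial) := by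
        rw [mul_pow]; ring


/-- The series solution `u(y) = Σ_{j=0}^∞ e^{−(s+j)y}/(j!·Γ(2s+j+1))` of the Yukawa
Schrödinger equation (with the reciprocal Gamma convention: Mathlib's `Complex.Gamma`
vanishes at its poles). -/
noncomputable def uYuk (s : ℂ) (y : ℝ) : ℂ :=
  ∑' j : ℕ, Complex.exp (-(s + (j : ℂ)) * (y : ℂ)) /
    ((j.factorial : ℂ) * Complex.Gamma (2 * s + (j : ℂ) + 1))

set_option maxHeartbeats 2000000 in
/-- the series converges absolutely for every `y ∈ ℝ`, and `u` is twice
differentiable on `ℝ` and satisfies `−u'' + e^{−y}u + s²u = 0`. -/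
theorem uYuk_solves_schrodinger (s : ℂ) :
    (∀ y : ℝ, Summable fun j : ℕ =>
      ‖Complex.exp (-(s + (j : ℂ)) * (y : ℂ)) /
        ((j.factorial : ℂ) * Complex.Gamma (2 * s + (j : ℂ) + 1))‖) ∧
    ∃ u' u'' : ℝ → ℂ,
      (∀ y : ℝ, HasDerivAt (uYuk s) (u' y) y) ∧
      (∀ y : ℝ, HasDerivAt u' (u'' y) y) ∧
      (∀ y : ℝ, -u'' y + (Real.exp (-y) : ℂ) * uYuk s y + s ^ 2 * uYuk s y = 0) := by
  obtain ⟨C, hC0, hC⟩ := gammaInvBound s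
  -- the master dominating series
  have hM : ∀ R : ℝ, Summable (fun j : ℕ =>
      (C * Real.exp (‖s‖ * R)) * ((1 + ‖s‖ + j)^2 * Real.exp (j*R) / j.factorial)) :=
    fun R => (summableMaster (1 + ‖s‖) R (by positivity)).mul_left _
  -- the basic norm bound
  have hbound : ∀ (p j : ℕ) (R y : ℝ), p ≤ 2 → |y| ≤ R →
      ‖(s + (j:ℂ))^p * Complex.exp (-(s + (j:ℂ)) * (y:ℂ)) /
        ((j.factorial:ℂ) * Complex.Gamma (2*s + (j:ℂ) + 1))‖
      ≤ (C * Real.exp (‖s‖ * R)) * ((1 + ‖s‖ + j)^2 * Real.exp (j*R) / j.factorial) := by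
    intro p j R y hp hy
    have hR : 0 ≤ R := le_trans (abs_nonneg y) hy
    have hnorm : ‖(s + (j:ℂ))^p * Complex.exp (-(s + (j:ℂ)) * (y:ℂ)) /
        ((j.factorial:ℂ) * Complex.Gamma (2*s + (j:ℂ) + 1))‖
        = ‖s + (j:ℂ)‖^p * ‖Complex.exp (-(s + (j:ℂ)) * (y:ℂ))‖ *
          (((j.factorial:ℝ))⁻¹ * ‖(Complex.Gamma (2*s + (j:ℂ) + 1))⁻¹‖) := by
      rw [div_eq_mul_inv, mul_inv, norm_mul, norm_mul, norm_mul, norm_pow, norm_inv,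
        Complex.norm_natCast]
    rw [hnorm]
    have hA : ‖s + (j:ℂ)‖^p ≤ (1 + ‖s‖ + j)^2 := by
      have h1 : ‖s + (j:ℂ)‖ ≤ 1 + ‖s‖ + j := by
        calc ‖s + (j:ℂ)‖ ≤ ‖s‖ + ‖(j:ℂ)‖ := norm_add_le _ _
          _ = ‖s‖ + j := by rw [Complex.norm_natCast]
          _ ≤ 1 + ‖s‖ + j := by linarith
      calc ‖s + (j:ℂ)‖^p ≤ (1 + ‖s‖ + j)^p :=
            pow_le_pow_left₀ (norm_nonneg _) h1 p
        _ ≤ (1 + ‖s‖ + j)^2 := pow_le_pow_right₀ (by have := norm_nonneg s; have := Nat.cast_nonneg (α := ℝ) j; linarith) hp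
    have hE : ‖Complex.exp (-(s + (j:ℂ)) * (y:ℂ))‖ ≤ Real.exp (‖s‖ * R) * Real.exp (j*R) := by
      rw [Complex.norm_exp, ← Real.exp_add]
      apply Real.exp_le_exp.mpr
      have hre : ((-(s + (j:ℂ)) * (y:ℂ)).re) = -((s.re + j) * y) := by
        simp [Complex.mul_re]; ring
      rw [hre]
      have h1 : |s.re + (j:ℝ)| ≤ ‖s‖ + j := by
        calc |s.re + (j:ℝ)| ≤ |s.re| + |(j:ℝ)| := abs_add_le _ _
          _ ≤ ‖s‖ + j := by
            have := Complex.abs_re_le_norm s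
            simp [Nat.abs_cast]
            linarith [this]
      calc -((s.re + j) * y) ≤ |(s.re + j) * y| := neg_le_abs _
        _ = |s.re + (j:ℝ)| * |y| := abs_mul _ _
        _ ≤ (‖s‖ + j) * R := by
            apply mul_le_mul h1 hy (abs_nonneg _) (by positivity)
        _ = ‖s‖ * R + j * R := by ring
    have hG : ‖(Complex.Gamma (2*s + (j:ℂ) + 1))⁻¹‖ ≤ C := hC j
    calc ‖s + (j:ℂ)‖^p * ‖Complex.exp (-(s + (j:ℂ)) * (y:ℂ))‖ *
          (((j.factorial:ℝ))⁻¹ * ‖(Complex.Gamma (2*s + (j:ℂ) + 1))⁻¹‖)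
        ≤ (1 + ‖s‖ + j)^2 * (Real.exp (‖s‖ * R) * Real.exp (j*R)) *
          (((j.factorial:ℝ))⁻¹ * C) := by
          have hfj : (0:ℝ) ≤ ((j.factorial:ℝ))⁻¹ := by positivity
          apply mul_le_mul (mul_le_mul hA hE (norm_nonneg _) (by positivity))
            (mul_le_mul_of_nonneg_left hG hfj)
            (mul_nonneg hfj (norm_nonneg _)) (by positivity)
      _ = (C * Real.exp (‖s‖ * R)) * ((1 + ‖s‖ + j)^2 * Real.exp (j*R) / j.factorial) := by
          rw [div_eq_mul_inv]; ring
  -- summability in norm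
  have hSnorm : ∀ (p : ℕ), p ≤ 2 → ∀ y : ℝ, Summable (fun j : ℕ =>
      ‖(s + (j:ℂ))^p * Complex.exp (-(s + (j:ℂ)) * (y:ℂ)) /
        ((j.factorial:ℂ) * Complex.Gamma (2*s + (j:ℂ) + 1))‖) :=
    fun p hp y => (hM |y|).of_nonneg_of_le (fun j => norm_nonneg _)
      (fun j => hbound p j |y| y hp le_rfl)
  have hS : ∀ (p : ℕ), p ≤ 2 → ∀ y : ℝ, Summable (fun j : ℕ =>
      (s + (j:ℂ))^p * Complex.exp (-(s + (j:ℂ)) * (y:ℂ)) /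
        ((j.factorial:ℂ) * Complex.Gamma (2*s + (j:ℂ) + 1))) :=
    fun p hp y => Summable.of_norm (hSnorm p hp y)
  constructor
  · intro y
    refine ((hSnorm 0 (by norm_num) y).congr ?_)
    intro j; simp [pow_zero, one_mul]
  -- derivative helpers
  have hD1 : ∀ (j : ℕ) (y : ℝ), HasDerivAt (fun z : ℝ => Complex.exp (-(s + (j:ℂ)) * (z:ℂ)))
      (-(s + (j:ℂ)) * Complex.exp (-(s + (j:ℂ)) * ((y:ℝ):ℂ))) y := by
    intro j y
    have h0 : HasDerivAt (fun z : ℂ => Complex.exp (-(s + (j:ℂ)) * z))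
        (-(s + (j:ℂ)) * Complex.exp (-(s + (j:ℂ)) * ((y:ℝ):ℂ))) ((y:ℝ):ℂ) := by
      have h1 := ((hasDerivAt_id ((y:ℝ):ℂ)).const_mul (-(s + (j:ℂ)))).cexp
      simp only [id_eq, mul_one] at h1
      exact h1.congr_deriv (by ring)
    exact h0.comp_ofReal
  refine ⟨fun y => ∑' j : ℕ, -(s + (j:ℂ)) * Complex.exp (-(s + (j:ℂ)) * (y:ℂ)) /
      ((j.factorial:ℂ) * Complex.Gamma (2 * s + (j:ℂ) + 1)),
    fun y => ∑' j : ℕ, (s + (j:ℂ))^2 * Complex.exp (-(s + (j:ℂ)) * (y:ℂ)) /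
      ((j.factorial:ℂ) * Complex.Gamma (2 * s + (j:ℂ) + 1)), ?_, ?_, ?_⟩
  · -- first derivative
    intro y₀
    have hyi : y₀ ∈ Set.Ioo (y₀ - 1) (y₀ + 1) := ⟨by linarith, by linarith⟩
    have habs : ∀ y ∈ Set.Ioo (y₀ - 1) (y₀ + 1), |y| ≤ |y₀| + 1 := by
      intro y hy
      obtain ⟨h1, h2⟩ := hy
      rw [abs_le]
      constructor
      · linarith [neg_abs_le y₀]
      · linarith [le_abs_self y₀]
    show HasDerivAt (fun z : ℝ => ∑' j : ℕ, Complex.exp (-(s + (j:ℂ)) * (z:ℂ)) /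
        ((j.factorial:ℂ) * Complex.Gamma (2 * s + (j:ℂ) + 1)))
      (∑' j : ℕ, -(s + (j:ℂ)) * Complex.exp (-(s + (j:ℂ)) * ((y₀:ℝ):ℂ)) /
        ((j.factorial:ℂ) * Complex.Gamma (2 * s + (j:ℂ) + 1))) y₀
    refine hasDerivAt_tsum_of_isPreconnected
      (g := fun (j : ℕ) (z : ℝ) => Complex.exp (-(s + (j:ℂ)) * (z:ℂ)) /
        ((j.factorial:ℂ) * Complex.Gamma (2 * s + (j:ℂ) + 1)))
      (g' := fun (j : ℕ) (z : ℝ) => -(s + (j:ℂ)) * Complex.exp (-(s + (j:ℂ)) * (z:ℂ)) /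
        ((j.factorial:ℂ) * Complex.Gamma (2 * s + (j:ℂ) + 1)))
      (hM (|y₀|+1)) isOpen_Ioo
      (convex_Ioo _ _).isPreconnected ?_ ?_ hyi ?_ hyi
    · intro j y _
      exact (hD1 j y).div_const _
    · intro j y hy
      have hb := hbound 1 j (|y₀|+1) y (by norm_num) (habs y hy)
      calc ‖-(s + (j:ℂ)) * Complex.exp (-(s + (j:ℂ)) * ((y:ℝ):ℂ)) /
            ((j.factorial:ℂ) * Complex.Gamma (2 * s + (j:ℂ) + 1))‖
          = ‖(s + (j:ℂ))^1 * Complex.exp (-(s + (j:ℂ)) * ((y:ℝ):ℂ)) /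
            ((j.factorial:ℂ) * Complex.Gamma (2 * s + (j:ℂ) + 1))‖ := by
            rw [pow_one, neg_mul, neg_div, norm_neg]
        _ ≤ _ := hb
    · exact (hS 0 (by norm_num) y₀).congr (fun j => by simp)
  · -- second derivative
    intro y₀
    have hyi : y₀ ∈ Set.Ioo (y₀ - 1) (y₀ + 1) := ⟨by linarith, by linarith⟩
    have habs : ∀ y ∈ Set.Ioo (y₀ - 1) (y₀ + 1), |y| ≤ |y₀| + 1 := by
      intro y hy
      obtain ⟨h1, h2⟩ := hy
      rw [abs_le]
      constructor
      · linarith [neg_abs_le y₀]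
      · linarith [le_abs_self y₀]
    refine hasDerivAt_tsum_of_isPreconnected
      (g := fun (j : ℕ) (z : ℝ) => -(s + (j:ℂ)) * Complex.exp (-(s + (j:ℂ)) * (z:ℂ)) /
        ((j.factorial:ℂ) * Complex.Gamma (2 * s + (j:ℂ) + 1)))
      (g' := fun (j : ℕ) (z : ℝ) => (s + (j:ℂ))^2 * Complex.exp (-(s + (j:ℂ)) * (z:ℂ)) /
        ((j.factorial:ℂ) * Complex.Gamma (2 * s + (j:ℂ) + 1)))
      (hM (|y₀|+1)) isOpen_Ioo
      (convex_Ioo _ _).isPreconnected ?_ ?_ hyi ?_ hyi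
    · intro j y _
      have := ((hD1 j y).const_mul (-(s + (j:ℂ)))).div_const
        ((j.factorial:ℂ) * Complex.Gamma (2 * s + (j:ℂ) + 1))
      exact this.congr_deriv (by ring)
    · intro j y hy
      exact hbound 2 j (|y₀|+1) y le_rfl (habs y hy)
    · exact ((hS 1 (by norm_num) y₀).neg).congr (fun j => by rw [pow_one]; ring)
  · -- the ODE
    intro y
    have hj1 : ∀ j : ℕ, ((j:ℂ)+1) ≠ 0 := fun j => Nat.cast_add_one_ne_zero j
    have inv_helper : ∀ {a b c d : ℂ}, a ≠ 0 → b ≠ 0 →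
        (a * b) * ((a * c) * (b * d))⁻¹ = (c * d)⁻¹ := by
      intro a b c d ha hb
      calc (a * b) * ((a * c) * (b * d))⁻¹
          = (a * a⁻¹) * (b * b⁻¹) * (c⁻¹ * d⁻¹) := by
            simp only [mul_inv]; ring
        _ = (c * d)⁻¹ := by
            rw [mul_inv_cancel₀ ha, mul_inv_cancel₀ hb, mul_inv]; ring
    have hcoef : ∀ j : ℕ, (((j:ℂ)+1) * (2 * s + (j:ℂ) + 1)) *
        (((j+1).factorial : ℂ) * Complex.Gamma (2 * s + ((j:ℂ) + 1) + 1))⁻¹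
        = ((j.factorial:ℂ) * Complex.Gamma (2 * s + (j:ℂ) + 1))⁻¹ := by
      intro j
      have harg : 2 * s + ((j:ℂ) + 1) + 1 = (2 * s + (j:ℂ) + 1) + 1 := by ring
      rw [harg]
      by_cases h : 2 * s + (j:ℂ) + 1 = 0
      · rw [h]
        simp [Complex.Gamma_zero]
      · rw [Complex.Gamma_add_one _ h]
        have hf : ((j+1).factorial : ℂ) = ((j:ℂ)+1) * (j.factorial:ℂ) := by
          rw [Nat.factorial_succ]; push_cast; ring
        rw [hf]
        exact inv_helper (hj1 j) h
    have hsum0 : Summable (fun j : ℕ => Complex.exp (-(s + (j:ℂ)) * (y:ℂ)) /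
        ((j.factorial:ℂ) * Complex.Gamma (2 * s + (j:ℂ) + 1))) :=
      (hS 0 (by norm_num) y).congr (fun j => by simp)
    have hsum2 : Summable (fun j : ℕ => (s + (j:ℂ))^2 * Complex.exp (-(s + (j:ℂ)) * (y:ℂ)) /
        ((j.factorial:ℂ) * Complex.Gamma (2 * s + (j:ℂ) + 1))) := hS 2 le_rfl y
    have hsumw : Summable (fun j : ℕ => ((s + (j:ℂ))^2 - s^2) *
        Complex.exp (-(s + (j:ℂ)) * (y:ℂ)) /
        ((j.factorial:ℂ) * Complex.Gamma (2 * s + (j:ℂ) + 1))) := by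
      refine (hsum2.sub (hsum0.mul_left (s^2))).congr (fun j => ?_)
      ring
    have huY : uYuk s y = ∑' j : ℕ, Complex.exp (-(s + (j:ℂ)) * (y:ℂ)) /
        ((j.factorial:ℂ) * Complex.Gamma (2 * s + (j:ℂ) + 1)) := rfl
    have hterm : ∀ j : ℕ, ((s + ((j:ℂ)+1))^2 - s^2) *
        Complex.exp (-(s + ((j:ℂ)+1)) * (y:ℂ)) /
        (((j+1).factorial:ℂ) * Complex.Gamma (2 * s + ((j:ℂ)+1) + 1))
        = Complex.exp (-(y:ℂ)) * (Complex.exp (-(s + (j:ℂ)) * (y:ℂ)) /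
          ((j.factorial:ℂ) * Complex.Gamma (2 * s + (j:ℂ) + 1))) := by
      intro j
      have e1 : ((s + ((j:ℂ)+1))^2 - s^2) * Complex.exp (-(s + ((j:ℂ)+1)) * (y:ℂ)) /
          (((j+1).factorial:ℂ) * Complex.Gamma (2 * s + ((j:ℂ)+1) + 1))
          = (((j:ℂ)+1) * (2 * s + (j:ℂ) + 1)) *
            (((j+1).factorial:ℂ) * Complex.Gamma (2 * s + ((j:ℂ)+1) + 1))⁻¹ *
            Complex.exp (-(s + ((j:ℂ)+1)) * (y:ℂ)) := by
        rw [div_eq_mul_inv]; ring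
      rw [e1, hcoef j]
      rw [show -(s + ((j:ℂ)+1)) * (y:ℂ) = -(y:ℂ) + -(s + (j:ℂ)) * (y:ℂ) from by ring,
        Complex.exp_add]
      rw [div_eq_mul_inv]; ring
    have hshifted : (∑' j : ℕ, ((s + (j:ℂ))^2 - s^2) * Complex.exp (-(s + (j:ℂ)) * (y:ℂ)) /
        ((j.factorial:ℂ) * Complex.Gamma (2 * s + (j:ℂ) + 1)))
        = Complex.exp (-(y:ℂ)) * uYuk s y := by
      rw [hsumw.tsum_eq_zero_add]
      have h0 : ((s + ((0:ℕ):ℂ))^2 - s^2) * Complex.exp (-(s + ((0:ℕ):ℂ)) * (y:ℂ)) /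
          (((0:ℕ).factorial:ℂ) * Complex.Gamma (2 * s + ((0:ℕ):ℂ) + 1)) = 0 := by
        have : (s + ((0:ℕ):ℂ))^2 - s^2 = 0 := by push_cast; ring
        rw [this, zero_mul, zero_div]
      rw [h0, zero_add]
      have : (fun j : ℕ => ((s + ((j+1:ℕ):ℂ))^2 - s^2) *
          Complex.exp (-(s + ((j+1:ℕ):ℂ)) * (y:ℂ)) /
          (((j+1).factorial:ℂ) * Complex.Gamma (2 * s + ((j+1:ℕ):ℂ) + 1)))
          = (fun j : ℕ => Complex.exp (-(y:ℂ)) * (Complex.exp (-(s + (j:ℂ)) * (y:ℂ)) /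
            ((j.factorial:ℂ) * Complex.Gamma (2 * s + (j:ℂ) + 1)))) := by
        funext j
        push_cast
        exact hterm j
      rw [this, tsum_mul_left, ← huY]
    have hA : (∑' j : ℕ, (s + (j:ℂ))^2 * Complex.exp (-(s + (j:ℂ)) * (y:ℂ)) /
        ((j.factorial:ℂ) * Complex.Gamma (2 * s + (j:ℂ) + 1))) - s^2 * uYuk s y
        = Complex.exp (-(y:ℂ)) * uYuk s y := by
      rw [← hshifted, huY, ← tsum_mul_left, ← Summable.tsum_sub hsum2 (hsum0.mul_left (s^2))]
      exact tsum_congr fun j => by ring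
    rw [show ((Real.exp (-y) : ℝ):ℂ) = Complex.exp (-(y:ℂ)) from by
      rw [← Complex.ofReal_neg, Complex.ofReal_exp]]
    rw [← hA]
    ring
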